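/- Let K be a complex square matrix and μ a Hermitian matrix satisfying μ ≥ ½(I − K*K) and μ ≥ −½(I − K*K). Define |K₂|² = μ + ½(K*K + I). Then |K₂|² ≥ I and |K₂|² ≥ K*K; consequently, with K₁ = K |K₂|⁻¹ (using the inverse, which exists since |K₂|² ≥ I), one has K₁ K₁* ≤ I. -/

import Mathlib

open scoped ComplexOrder
open Matrix

/-- The square root of a positive semidefinite matrix, as defined in Mathlib (December 2024). -/
noncomputable def Matrix.PosSemidef.sqrt {n 𝕜 : Type*} [Fintype n] [DecidableEq n] [RCLike 𝕜]
    {A : Matrix n n 𝕜} (hA : A.PosSemidef) : Matrix n n 𝕜 :=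
  (hA.1.eigenvectorUnitary : Matrix n n 𝕜) *
    diagonal (((↑) : ℝ → 𝕜) ∘ (√·) ∘ hA.1.eigenvalues) *
    (star hA.1.eigenvectorUnitary : Matrix n n 𝕜)

lemma Matrix.PosSemidef.posSemidef_sqrt {n 𝕜 : Type*} [Fintype n] [DecidableEq n] [RCLike 𝕜]
    {A : Matrix n n 𝕜} (hA : A.PosSemidef) : hA.sqrt.PosSemidef := by
  unfold Matrix.PosSemidef.sqrt
  rw [star_eq_conjTranspose]
  refine PosSemidef.mul_mul_conjTranspose_same ?_ _
  rw [posSemidef_diagonal_iff]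
  intro i
  simp only [Function.comp_apply, RCLike.ofReal_nonneg]
  exact Real.sqrt_nonneg _

lemma Matrix.PosSemidef.sqrt_mul_self {n 𝕜 : Type*} [Fintype n] [DecidableEq n] [RCLike 𝕜]
    {A : Matrix n n 𝕜} (hA : A.PosSemidef) : hA.sqrt * hA.sqrt = A := by
  unfold Matrix.PosSemidef.sqrt
  conv_rhs => rw [hA.1.spectral_theorem, Unitary.conjStarAlgAut_apply]
  have hu : star (hA.1.eigenvectorUnitary : Matrix n n 𝕜) * (hA.1.eigenvectorUnitary : Matrix n n 𝕜) = 1 :=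
    Unitary.coe_star_mul_self _
  simp only [← Matrix.mul_assoc]
  rw [Matrix.mul_assoc _ (star _ : Matrix n n 𝕜), hu, Matrix.mul_one, Matrix.mul_assoc _ (diagonal _) (diagonal _),
    diagonal_mul_diagonal]
  congr 3
  funext i
  simp only [Function.comp_apply, ← RCLike.ofReal_mul]
  rw [Real.mul_self_sqrt (hA.eigenvalues_nonneg i)]
/-- If `1 - Uᴴ U ≥ 0` then `1 - U Uᴴ ≥ 0`, via the Schur complement of the block
matrix `[[1, Uᴴ], [U, 1]]`. -/
lemma flip_one_sub {a b : ℕ} (U : Matrix (Fin a) (Fin b) ℂ)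
    (h : ((1 : Matrix (Fin b) (Fin b) ℂ) - Uᴴ * U).PosSemidef) :
    ((1 : Matrix (Fin a) (Fin a) ℂ) - U * Uᴴ).PosSemidef := by
  letI : Invertible (1 : Matrix (Fin b) (Fin b) ℂ) := invertibleOne
  letI : Invertible (1 : Matrix (Fin a) (Fin a) ℂ) := invertibleOne
  have h1 := Matrix.PosDef.fromBlocks₁₁ (A := (1 : Matrix (Fin b) (Fin b) ℂ))
    Uᴴ (1 : Matrix (Fin a) (Fin a) ℂ) Matrix.PosDef.one
  have h2 := Matrix.PosDef.fromBlocks₂₂ (1 : Matrix (Fin b) (Fin b) ℂ)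
    Uᴴ (D := (1 : Matrix (Fin a) (Fin a) ℂ)) Matrix.PosDef.one
  simp only [inv_one, Matrix.mul_one, Matrix.one_mul, conjTranspose_conjTranspose] at h1 h2
  exact h1.mp (h2.mpr h)

/-- if `μ ≥ ±½(I - K*K)` (the complete positivity condition of a
gauge-covariant Gaussian channel), then `|K₂|² := μ + ½(K*K + I)` satisfies
`|K₂|² ≥ I` and `|K₂|² ≥ K*K`, and `K₁ = K |K₂|⁻¹` satisfies `K₁ K₁* ≤ I`. -/
theorem stmt8 {sA sB : ℕ} (K : Matrix (Fin sA) (Fin sB) ℂ)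
    (μ : Matrix (Fin sB) (Fin sB) ℂ) (hμ : μ.IsHermitian)
    (hge : (μ - (1 / 2 : ℂ) • ((1 : Matrix (Fin sB) (Fin sB) ℂ) - Kᴴ * K)).PosSemidef)
    (hle : (μ + (1 / 2 : ℂ) • ((1 : Matrix (Fin sB) (Fin sB) ℂ) - Kᴴ * K)).PosSemidef) :
    ((μ + (1 / 2 : ℂ) • (Kᴴ * K + 1)) - 1).PosSemidef ∧
    ((μ + (1 / 2 : ℂ) • (Kᴴ * K + 1)) - Kᴴ * K).PosSemidef ∧
    ∀ hM : (μ + (1 / 2 : ℂ) • (Kᴴ * K + 1)).PosSemidef,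
      ((1 : Matrix (Fin sA) (Fin sA) ℂ) -
        (K * hM.sqrt⁻¹) * (K * hM.sqrt⁻¹)ᴴ).PosSemidef := by
  set M : Matrix (Fin sB) (Fin sB) ℂ := μ + (1 / 2 : ℂ) • (Kᴴ * K + 1) with hMdef
  have e1 : M - 1 = μ - (1 / 2 : ℂ) • ((1 : Matrix (Fin sB) (Fin sB) ℂ) - Kᴴ * K) := by
    rw [hMdef]; module
  have e2 : M - Kᴴ * K = μ + (1 / 2 : ℂ) • ((1 : Matrix (Fin sB) (Fin sB) ℂ) - Kᴴ * K) := by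
    rw [hMdef]; module
  have hge' : (M - 1).PosSemidef := e1 ▸ hge
  have hle' : (M - Kᴴ * K).PosSemidef := e2 ▸ hle
  refine ⟨hge', hle', fun hM => ?_⟩
  -- M is positive definite since M = (M - 1) + 1
  have hMpd : M.PosDef := by
    have : ((M - 1) + 1).PosDef := Matrix.PosDef.posSemidef_add hge' Matrix.PosDef.one
    simpa using this
  set S := hM.sqrt with hSdef
  have hS : S.PosSemidef := hM.posSemidef_sqrt
  have hSS : S * S = M := hM.sqrt_mul_self
  -- S is invertible
  have hdet : IsUnit S.det := by
    have hdM : (0 : ℂ) < M.det := hMpd.det_pos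
    have : S.det * S.det = M.det := by rw [← det_mul, hSS]
    refine isUnit_iff_ne_zero.mpr fun h0 => ?_
    rw [h0, mul_zero] at this
    exact absurd (this ▸ hdM) (lt_irrefl _)
  have hinv : S⁻¹ * S = 1 := nonsing_inv_mul S hdet
  have hinvH : (S⁻¹)ᴴ = S⁻¹ := by
    rw [conjTranspose_nonsing_inv, hS.isHermitian.eq]
  -- the key identity
  have key : (1 : Matrix (Fin sB) (Fin sB) ℂ) - (K * S⁻¹)ᴴ * (K * S⁻¹)
      = S⁻¹ * (M - Kᴴ * K) * (S⁻¹)ᴴ := by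
    rw [Matrix.mul_sub, Matrix.sub_mul, hinvH]
    congr 1
    · rw [← hSS, ← mul_assoc, hinv, Matrix.one_mul, mul_nonsing_inv S hdet]
    · rw [conjTranspose_mul, hinvH]
      simp [Matrix.mul_assoc]
  have hpsd : ((1 : Matrix (Fin sB) (Fin sB) ℂ) - (K * S⁻¹)ᴴ * (K * S⁻¹)).PosSemidef := by
    rw [key]
    exact hle'.mul_mul_conjTranspose_same S⁻¹
  exact flip_one_sub (K * S⁻¹) hpsd
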